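/- arXiv:1009.5203 — 3 statements merged into one kernel-verified Lean document; each statement's English description precedes it below -/
import Mathlib

section
/- Let C be a commutative ring and A a C-algebra that is a finitely generated projective C-module such that the natural map j_A : A ⊗_C A^op → End_C(A), j_A(a⊗b)(r) = arb, is an isomorphism (i.e. A is Azumaya over C). Then the center Z(A) equals C (i.e. the structure map C → Z(A) is bijective). -/
open TensorProduct

/-- The natural map `j_A : A ⊗_C A^op → End_C(A)`, `j_A(a ⊗ b)(r) = a * r * b`. -/
noncomputable def envelopingMap (C A : Type*) [CommRing C] [Ring A] [Algebra C A] :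
    A ⊗[C] Aᵐᵒᵖ →ₗ[C] Module.End C A :=
  TensorProduct.lift <| LinearMap.mk₂ C
    (fun a b => (LinearMap.mulRight C b.unop).comp (LinearMap.mulLeft C a))
    (by intro a a' b; ext r; simp [add_mul])
    (by intro c a b; ext r; simp [smul_mul_assoc])
    (by intro a b b'; ext r; simp [mul_add])
    (by intro c a b; ext r; simp [mul_smul_comm])

/-- If `A` is an Azumaya algebra over the commutative ring `C` (finitely
generated projective and faithful as a `C`-module, with the enveloping map
`j_A : A ⊗_C A^op → End_C(A)` bijective), then the center of `A` equals `C`: the structure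
map `C → A` is injective with image exactly `Z(A)`. -/
theorem azumaya_center_eq_base (C A : Type*) [CommRing C] [Ring A] [Algebra C A]
    [Module.Finite C A] [Module.Projective C A] [FaithfulSMul C A]
    (hAz : Function.Bijective (envelopingMap C A)) :
    Function.Injective (algebraMap C A) ∧
      Set.range (algebraMap C A) = Set.center A := by
  constructor
  · intro c c' h
    apply FaithfulSMul.eq_of_smul_eq_smul (α := A)
    intro x
    rw [Algebra.smul_def, Algebra.smul_def, h]
  · apply Set.Subset.antisymm
    · rintro _ ⟨c, rfl⟩
      rw [Semigroup.mem_center_iff]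
      intro g
      exact (Algebra.commutes c g).symm
    · intro z hz
      rw [Semigroup.mem_center_iff] at hz
      -- Step 1: every C-linear endomorphism g of A satisfies g (z * x) = z * g x.
      have key : ∀ (g : Module.End C A) (x : A), g (z * x) = z * g x := by
        intro g x
        obtain ⟨t, rfl⟩ := hAz.2 g
        induction t using TensorProduct.induction_on with
        | zero => simp
        | tmul a b =>
            simp only [envelopingMap, TensorProduct.lift.tmul, LinearMap.mk₂_apply,
              LinearMap.coe_comp, Function.comp_apply, LinearMap.mulLeft_apply,
              LinearMap.mulRight_apply]
            simp only [← mul_assoc]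
            rw [hz a]
        | add u v hu hv => simp only [map_add, LinearMap.add_apply, hu, hv, mul_add]
      -- Step 2: dual basis from finite projectivity.
      obtain ⟨n, π, s, hπ, hs, hps⟩ := Module.Finite.exists_comp_eq_id_of_projective C A
      set lam : Fin n → (A →ₗ[C] C) := fun i => (LinearMap.proj i).comp s with hlam
      set a : Fin n → A := fun i => π (Pi.single i 1) with ha
      have dual : ∀ x : A, (∑ i, lam i x • a i) = x := by
        intro x
        have : (∑ i, lam i x • a i) = π (∑ i, s x i • (Pi.single i 1 : Fin n → C)) := by
          rw [map_sum]
          simp [lam, a]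
        rw [this]
        have h2 : (∑ i, s x i • (Pi.single i 1 : Fin n → C)) = s x := by
          ext j
          simp [Pi.single_apply]
        rw [h2]
        exact congrFun (congrArg (fun f => f.toFun) hps) x
      -- Step 3: key identity for rank-one maps: λ(z*x) • m = λ x • (z * m).
      have rank1 : ∀ (l : A →ₗ[C] C) (x m : A), l (z * x) • m = l x • (z * m) := by
        intro l x m
        have := key (l.smulRight m) x
        simpa [LinearMap.smulRight_apply, mul_smul_comm] using this
      -- Step 4: trace ideal is everything.
      set T : (Fin n → A) →ₗ[C] C := ∑ i, (lam i).comp (LinearMap.proj i) with hT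
      have hTapp : ∀ v : (Fin n → A), T v = ∑ i, lam i (v i) := by
        intro v; simp [T]
      have hTsingle : ∀ (j : Fin n) (w : A), T (Pi.single j w) = lam j w := by
        intro j w
        rw [hTapp]
        rw [Finset.sum_eq_single j]
        · simp
        · intro b _ hb; simp [Pi.single_eq_of_ne hb]
        · simp
      set τ : Ideal C := LinearMap.range T with hτ
      have hmemτ : ∀ (l : Fin n) (w : A), lam l w ∈ τ := by
        intro l w
        exact ⟨Pi.single l w, hTsingle l w⟩
      have hfg : τ.FG := by
        have : τ = Submodule.map T ⊤ := (LinearMap.range_eq_map T)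
        rw [this]
        exact Submodule.FG.map T ((inferInstance : Module.Finite C (Fin n → A)).fg_top)
      have hle : τ ≤ τ • τ := by
        rw [Ideal.smul_eq_mul]
        rintro _ ⟨v, rfl⟩
        rw [hTapp]
        apply Ideal.sum_mem
        intro i _
        have : lam i (v i) = ∑ j, lam j (v i) * lam i (a j) := by
          conv_lhs => rw [← dual (v i)]
          rw [map_sum]
          congr 1
          ext j
          rw [map_smul]
          simp [smul_eq_mul]
        rw [this]
        apply Ideal.sum_mem
        intro j _
        exact Ideal.mul_mem_mul (hmemτ j (v i)) (hmemτ i (a j))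
      obtain ⟨r, hr1, hr0⟩ :=
        Submodule.exists_sub_one_mem_and_smul_eq_zero_of_fg_of_le_smul τ τ hfg hle
      have hr : r = 0 := by
        apply FaithfulSMul.eq_of_smul_eq_smul (α := A)
        intro x
        rw [zero_smul]
        calc r • x = r • ∑ i, lam i x • a i := by rw [dual]
          _ = ∑ i, (r • lam i x) • a i := by
              rw [Finset.smul_sum]; congr 1; ext i; rw [smul_smul, smul_eq_mul]
          _ = 0 := by
              apply Finset.sum_eq_zero
              intro i _
              rw [hr0 (lam i x) (hmemτ i x), zero_smul]
      have hone : (1 : C) ∈ τ := by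
        have : (-1 : C) ∈ τ := by
          have := hr1; rw [hr, zero_sub] at this; exact this
        simpa using τ.neg_mem this
      obtain ⟨v, hv⟩ := hone
      -- Step 5: conclude z = algebraMap C A (∑ i, lam i (z * v i)).
      refine ⟨∑ i, lam i (z * v i), ?_⟩
      rw [Algebra.algebraMap_eq_smul_one, Finset.sum_smul]
      calc (∑ i, lam i (z * v i) • (1 : A)) = ∑ i, lam i (v i) • (z * 1) := by
            congr 1; ext i; rw [rank1 (lam i) (v i) 1]
        _ = (∑ i, lam i (v i)) • z := by rw [mul_one, Finset.sum_smul]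
        _ = z := by rw [← hTapp, hv, one_smul]
end

section
/- Kostant duality: for every ℂ-algebra R and ℂ-coalgebra C there is a natural bijection between algebra homomorphisms R → C^* and coalgebra homomorphisms C → R⁰, where C^* is the dual algebra of C and R⁰ is the dual coalgebra of R. -/
open TensorProduct

variable (R : Type*) [Ring R] [Algebra ℂ R]
variable (C : Type*) [AddCommGroup C] [Module ℂ C] [Coalgebra ℂ C]

/-- A linear map `φ : R → C^*` is an algebra homomorphism into the dual (convolution)
algebra of the coalgebra `C` iff `φ(1) = ε_C` and
`φ(rs)(c) = Σ φ(r)(c₍₁₎)·φ(s)(c₍₂₎)` for all `r, s ∈ R`, `c ∈ C`. -/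
def IsDualAlgebraHom (φ : R →ₗ[ℂ] Module.Dual ℂ C) : Prop :=
  φ 1 = Coalgebra.counit (R := ℂ) ∧
  ∀ (r s : R) (c : C),
    φ (r * s) c
      = LinearMap.mul' ℂ ℂ
          (TensorProduct.map (φ r) (φ s) (Coalgebra.comul (R := ℂ) c))

/-- A linear map `ψ : C → R^*` is a coalgebra homomorphism into the finite dual coalgebra
`R⁰` iff every `ψ(c)` kills a two-sided ideal of finite codimension (i.e. lands in `R⁰`),
`ψ` is counital (`ψ(c)(1) = ε_C(c)`), and it intertwines the comultiplications:
`ψ(c)(rs) = Σ ψ(c₍₁₎)(r)·ψ(c₍₂₎)(s)`. -/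
def IsFiniteDualCoalgebraHom (ψ : C →ₗ[ℂ] Module.Dual ℂ R) : Prop :=
  (∀ c : C, ∃ I : TwoSidedIdeal R, (∀ x ∈ I, ψ c x = 0) ∧
      FiniteDimensional ℂ (R ⧸ Submodule.span ℂ (I : Set R))) ∧
  (∀ c : C, ψ c 1 = Coalgebra.counit (R := ℂ) c) ∧
  ∀ (c : C) (r s : R),
    ψ c (r * s)
      = LinearMap.mul' ℂ ℂ
          (TensorProduct.map ((LinearMap.applyₗ r).comp ψ) ((LinearMap.applyₗ s).comp ψ)
            (Coalgebra.comul (R := ℂ) c))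

lemma expand_mul (φ : R →ₗ[ℂ] Module.Dual ℂ C)
    (hmul : ∀ (r s : R) (c : C),
      φ (r * s) c = LinearMap.mul' ℂ ℂ
        (TensorProduct.map (φ r) (φ s) (Coalgebra.comul (R := ℂ) c)))
    (a b : R) (c' : C) (S' : Finset (C × C))
    (h : Coalgebra.comul (R := ℂ) c' = ∑ p ∈ S', p.1 ⊗ₜ[ℂ] p.2) :
    φ (a * b) c' = ∑ p ∈ S', φ a p.1 * φ b p.2 := by
  rw [hmul a b c', h, map_sum, map_sum]
  simp [TensorProduct.map_tmul, LinearMap.mul'_apply]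

lemma flip_is_finite_dual (φ : R →ₗ[ℂ] Module.Dual ℂ C) (h : IsDualAlgebraHom R C φ) :
    IsFiniteDualCoalgebraHom R C φ.flip := by
  classical
  obtain ⟨h1, hmul⟩ := h
  refine ⟨?_, ?_, ?_⟩
  · intro c
    obtain ⟨S, hS⟩ := TensorProduct.exists_finset (Coalgebra.comul (R := ℂ) c)
    choose T hT using fun p : C × C =>
      TensorProduct.exists_finset (Coalgebra.comul (R := ℂ) p.1)
    set Mset : Finset C := S.biUnion (fun p => (T p).image Prod.snd) with hM
    have hvan : ∀ a : R, (∀ m ∈ Mset, φ a m = 0) → ∀ s r : R, φ (s * a * r) c = 0 := by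
      intro a ha s r
      rw [expand_mul R C φ hmul (s * a) r c S hS]
      refine Finset.sum_eq_zero fun p hp => ?_
      rw [expand_mul R C φ hmul s a p.1 (T p) (hT p)]
      rw [Finset.sum_eq_zero (fun q hq => ?_), zero_mul]
      rw [ha q.2 (Finset.mem_biUnion.2 ⟨p, hp, Finset.mem_image_of_mem _ hq⟩), mul_zero]
    have hz : (0 : R) ∈ {a : R | ∀ s r : R, φ (s * a * r) c = 0} := by intro s r; simp
    have hadd : ∀ {x y : R}, x ∈ {a : R | ∀ s r : R, φ (s * a * r) c = 0} →
        y ∈ {a : R | ∀ s r : R, φ (s * a * r) c = 0} →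
        x + y ∈ {a : R | ∀ s r : R, φ (s * a * r) c = 0} := by
      intro x y hx hy s r
      simp [mul_add, add_mul, hx s r, hy s r]
    have hneg : ∀ {x : R}, x ∈ {a : R | ∀ s r : R, φ (s * a * r) c = 0} →
        -x ∈ {a : R | ∀ s r : R, φ (s * a * r) c = 0} := by
      intro x hx s r
      simp [mul_neg, neg_mul, hx s r]
    have hml : ∀ {x y : R}, y ∈ {a : R | ∀ s r : R, φ (s * a * r) c = 0} →
        x * y ∈ {a : R | ∀ s r : R, φ (s * a * r) c = 0} := by
      intro x y hy s r
      rw [← mul_assoc]; exact hy (s * x) r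
    have hmr : ∀ {x y : R}, x ∈ {a : R | ∀ s r : R, φ (s * a * r) c = 0} →
        x * y ∈ {a : R | ∀ s r : R, φ (s * a * r) c = 0} := by
      intro x y hx s r
      have e : s * (x * y) * r = s * x * (y * r) := by simp only [mul_assoc]
      rw [e]; exact hx s (y * r)
    refine ⟨TwoSidedIdeal.mk' {a : R | ∀ s r : R, φ (s * a * r) c = 0} hz hadd hneg hml hmr,
      ?_, ?_⟩
    · intro x hx
      rw [TwoSidedIdeal.mem_mk'] at hx
      have := hx 1 1
      simpa using this
    · -- finite codimension
      set G : R →ₗ[ℂ] (Mset → ℂ) := LinearMap.pi (fun m => φ.flip m.1) with hG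
      haveI : FiniteDimensional ℂ (R ⧸ LinearMap.ker G) :=
        Module.Finite.equiv G.quotKerEquivRange.symm
      have hle : LinearMap.ker G ≤ Submodule.span ℂ
          ((TwoSidedIdeal.mk' {a : R | ∀ s r : R, φ (s * a * r) c = 0}
            hz hadd hneg hml hmr : TwoSidedIdeal R) : Set R) := by
        intro a ha
        apply Submodule.subset_span
        rw [TwoSidedIdeal.coe_mk']
        intro s r
        refine hvan a (fun m hm => ?_) s r
        have := congrFun (LinearMap.mem_ker.1 ha) ⟨m, hm⟩
        simpa [hG] using this
      have hle' : LinearMap.ker G ≤ Submodule.comap LinearMap.id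
          (Submodule.span ℂ
            ((TwoSidedIdeal.mk' {a : R | ∀ s r : R, φ (s * a * r) c = 0}
              hz hadd hneg hml hmr : TwoSidedIdeal R) : Set R)) := by simpa using hle
      have hsurj : Function.Surjective
          (Submodule.mapQ (LinearMap.ker G)
            (Submodule.span ℂ
              ((TwoSidedIdeal.mk' {a : R | ∀ s r : R, φ (s * a * r) c = 0}
                hz hadd hneg hml hmr : TwoSidedIdeal R) : Set R)) LinearMap.id hle') := by
        intro x
        obtain ⟨a, rfl⟩ := Submodule.Quotient.mk_surjective _ x
        exact ⟨Submodule.Quotient.mk a, rfl⟩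
      exact Module.Finite.of_surjective _ hsurj
  · intro c
    show φ 1 c = _
    rw [h1]
  · intro c r s
    have e1 : (LinearMap.applyₗ r).comp φ.flip = φ r := LinearMap.ext fun _ => rfl
    have e2 : (LinearMap.applyₗ s).comp φ.flip = φ s := LinearMap.ext fun _ => rfl
    rw [e1, e2]
    exact hmul r s c

lemma flip_is_dual_alg (ψ : C →ₗ[ℂ] Module.Dual ℂ R) (h : IsFiniteDualCoalgebraHom R C ψ) :
    IsDualAlgebraHom R C ψ.flip := by
  obtain ⟨-, h2, h3⟩ := h
  refine ⟨LinearMap.ext fun c => h2 c, fun r s c => ?_⟩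
  have e1 : (LinearMap.applyₗ r).comp ψ = ψ.flip r := LinearMap.ext fun _ => rfl
  have e2 : (LinearMap.applyₗ s).comp ψ = ψ.flip s := LinearMap.ext fun _ => rfl
  have := h3 c r s
  rw [e1, e2] at this
  exact this

/-- Kostant duality: for every ℂ-algebra `R` and ℂ-coalgebra `C` there is a
bijection, given by transposition (hence natural in both arguments), between algebra
homomorphisms `R → C^*` and coalgebra homomorphisms `C → R⁰` into the finite dual. -/
theorem kostant_duality :
    ∃ e : {φ : R →ₗ[ℂ] Module.Dual ℂ C // IsDualAlgebraHom R C φ}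
        ≃ {ψ : C →ₗ[ℂ] Module.Dual ℂ R // IsFiniteDualCoalgebraHom R C ψ},
      ∀ (φ : {φ : R →ₗ[ℂ] Module.Dual ℂ C // IsDualAlgebraHom R C φ}) (c : C) (r : R),
        ((e φ : C →ₗ[ℂ] Module.Dual ℂ R) c) r = ((φ : R →ₗ[ℂ] Module.Dual ℂ C) r) c := by
  refine ⟨⟨fun φ => ⟨φ.1.flip, flip_is_finite_dual R C φ.1 φ.2⟩,
    fun ψ => ⟨ψ.1.flip, flip_is_dual_alg R C ψ.1 ψ.2⟩,
    fun φ => Subtype.ext (LinearMap.flip_flip _),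
    fun ψ => Subtype.ext (LinearMap.flip_flip _)⟩, fun φ c r => rfl⟩
end

section
/- Let q_n be a primitive n-th root of unity and m = nk with q_m a primitive m-th root of unity such that q_m^{k²} = q_n. Then the assignment U_n ↦ U_m^k, V_n ↦ V_m^k extends to an injective ℂ[s^{±1},t^{±1}]-algebra homomorphism from the quantum torus ℂ_{q_n}[U_n^{±1},V_n^{±1}] (with U_n^n = s, V_n^n = t) into ℂ_{q_m}[U_m^{±1},V_m^{±1}] (with U_m^m = s, V_m^m = t). -/
private lemma qt_semiconj {R : Type*} [Ring R] [Algebra ℂ R] (q : ℂˣ) (U : Rˣ) (v : R)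
    (h : v * U = (q : ℂ) • ((U : R) * v)) :
    ∀ c : ℤ, v * ((U ^ c : Rˣ) : R) = ((q ^ c : ℂˣ) : ℂ) • (((U ^ c : Rˣ) : R) * v) := by
  have hneg : v * ((U⁻¹ : Rˣ) : R) = ((q⁻¹ : ℂˣ) : ℂ) • (((U⁻¹ : Rˣ) : R) * v) := by
    have h1 : ((U⁻¹ : Rˣ) : R) * v = (q : ℂ) • (v * ((U⁻¹ : Rˣ) : R)) := by
      have h2 := congrArg (fun z => ((U⁻¹ : Rˣ) : R) * z * ((U⁻¹ : Rˣ) : R)) h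
      simpa [mul_assoc, mul_smul_comm, smul_mul_assoc] using h2
    rw [h1, smul_smul, Units.inv_mul, one_smul]
  intro c
  induction c using Int.induction_on with
  | zero => simp
  | succ i ih =>
      have hU : ((U ^ ((i : ℤ) + 1) : Rˣ) : R) = ((U ^ (i : ℤ) : Rˣ) : R) * U := by
        rw [zpow_add_one, Units.val_mul]
      have hq : ((q ^ ((i : ℤ) + 1) : ℂˣ) : ℂ) = ((q ^ (i : ℤ) : ℂˣ) : ℂ) * q := by
        rw [zpow_add_one, Units.val_mul]
      rw [hU, hq, ← mul_assoc, ih, smul_mul_assoc, mul_assoc, h, mul_smul_comm,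
        smul_smul, mul_assoc]
  | pred i ih =>
      have hU : ((U ^ (-(i : ℤ) - 1) : Rˣ) : R) = ((U ^ (-(i : ℤ)) : Rˣ) : R) * ((U⁻¹ : Rˣ) : R) := by
        rw [zpow_sub_one, Units.val_mul]
      have hq : ((q ^ (-(i : ℤ) - 1) : ℂˣ) : ℂ) = ((q ^ (-(i : ℤ)) : ℂˣ) : ℂ) * ((q⁻¹ : ℂˣ) : ℂ) := by
        rw [zpow_sub_one, Units.val_mul]
      rw [hU, hq, ← mul_assoc, ih, smul_mul_assoc, mul_assoc, hneg, mul_smul_comm,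
        smul_smul, mul_assoc]

/-- Let `q_n` be a primitive `n`-th root of unity, `m = n·k`, and `q_m` a
primitive `m`-th root of unity with `q_m^{k²} = q_n`.  Let `L = ℂ[s^{±1}, t^{±1}]` (an
abstract commutative ℂ-algebra generated by units `s, t` and their inverses), and let
`A = ℂ_{q_n}[U_n^{±1}, V_n^{±1}]` and `B = ℂ_{q_m}[U_m^{±1}, V_m^{±1}]` be the quantum tori
over `L`, with `U_n^n = s`, `V_n^n = t`, `U_m^m = s`, `V_m^m = t`.  Then the assignment
`U_n ↦ U_m^k`, `V_n ↦ V_m^k` extends to an injective `L`-algebra homomorphism `A → B`. -/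
theorem quantum_torus_compatible_embedding
    (L A B : Type*) [CommRing L] [Algebra ℂ L] [Ring A] [Ring B]
    [Algebra ℂ A] [Algebra ℂ B] [Algebra L A] [Algebra L B]
    [IsScalarTower ℂ L A] [IsScalarTower ℂ L B]
    (n k : ℕ) (hn : 0 < n) (hk : 0 < k)
    (qn qm : ℂ) (hqn : IsPrimitiveRoot qn n) (hqm : IsPrimitiveRoot qm (n * k))
    (hq : qm ^ (k ^ 2) = qn)
    (s t : Lˣ)
    (hL : Algebra.adjoin ℂ
        ({(s : L), ((s⁻¹ : Lˣ) : L), (t : L), ((t⁻¹ : Lˣ) : L)} : Set L) = ⊤)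
    (Un Vn : Aˣ) (hrelA : (Vn : A) * Un = qn • ((Un : A) * Vn))
    (basA : Module.Basis (ℤ × ℤ) ℂ A)
    (hbasA : ∀ ij : ℤ × ℤ, basA ij = ((Un ^ ij.1 : Aˣ) : A) * ((Vn ^ ij.2 : Aˣ) : A))
    (hsA : algebraMap L A s = ((Un ^ n : Aˣ) : A))
    (htA : algebraMap L A t = ((Vn ^ n : Aˣ) : A))
    (Um Vm : Bˣ) (hrelB : (Vm : B) * Um = qm • ((Um : B) * Vm))
    (basB : Module.Basis (ℤ × ℤ) ℂ B)
    (hbasB : ∀ ij : ℤ × ℤ, basB ij = ((Um ^ ij.1 : Bˣ) : B) * ((Vm ^ ij.2 : Bˣ) : B))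
    (hsB : algebraMap L B s = ((Um ^ (n * k) : Bˣ) : B))
    (htB : algebraMap L B t = ((Vm ^ (n * k) : Bˣ) : B)) :
    ∃ f : A →ₐ[L] B, Function.Injective f ∧
      f ((Un : Aˣ) : A) = ((Um ^ k : Bˣ) : B) ∧
      f ((Vn : Aˣ) : A) = ((Vm ^ k : Bˣ) : B) := by
  classical
  obtain ⟨u, hu⟩ := hqn.isUnit hn.ne'
  obtain ⟨w, hw⟩ := hqm.isUnit (Nat.mul_pos hn hk).ne'
  have hwu : w ^ (k ^ 2) = u := by
    apply Units.ext
    rw [Units.val_pow_eq_pow_val, hw, hq, hu]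
  -- commutation in A with integer exponents
  have hcommA : ∀ b c : ℤ, ((Vn ^ b : Aˣ) : A) * ((Un ^ c : Aˣ) : A)
      = ((u ^ (b * c) : ℂˣ) : ℂ) • (((Un ^ c : Aˣ) : A) * ((Vn ^ b : Aˣ) : A)) := by
    intro b c
    have h0 : (Un : A) * (Vn : A) = ((u⁻¹ : ℂˣ) : ℂ) • ((Vn : A) * Un) := by
      rw [hrelA, ← hu, smul_smul, Units.inv_mul, one_smul]
    have h1 := qt_semiconj u⁻¹ Vn ((Un : A)) h0 b
    have h1' : ((Vn ^ b : Aˣ) : A) * (Un : A)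
        = ((u ^ b : ℂˣ) : ℂ) • ((Un : A) * ((Vn ^ b : Aˣ) : A)) := by
      rw [inv_zpow] at h1
      rw [h1, smul_smul, Units.mul_inv, one_smul]
    have h2 := qt_semiconj (u ^ b) Un (((Vn ^ b : Aˣ) : A)) h1' c
    rw [h2, ← zpow_mul]
  have hcommB : ∀ b c : ℤ, ((Vm ^ b : Bˣ) : B) * ((Um ^ c : Bˣ) : B)
      = ((w ^ (b * c) : ℂˣ) : ℂ) • (((Um ^ c : Bˣ) : B) * ((Vm ^ b : Bˣ) : B)) := by
    intro b c
    have h0 : (Um : B) * (Vm : B) = ((w⁻¹ : ℂˣ) : ℂ) • ((Vm : B) * Um) := by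
      rw [hrelB, ← hw, smul_smul, Units.inv_mul, one_smul]
    have h1 := qt_semiconj w⁻¹ Vm ((Um : B)) h0 b
    have h1' : ((Vm ^ b : Bˣ) : B) * (Um : B)
        = ((w ^ b : ℂˣ) : ℂ) • ((Um : B) * ((Vm ^ b : Bˣ) : B)) := by
      rw [inv_zpow] at h1
      rw [h1, smul_smul, Units.mul_inv, one_smul]
    have h2 := qt_semiconj (w ^ b) Um (((Vm ^ b : Bˣ) : B)) h1' c
    rw [h2, ← zpow_mul]
  -- multiplication of basis vectors
  have hmulA : ∀ p r : ℤ × ℤ, (basA p) * (basA r)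
      = ((u ^ (p.2 * r.1) : ℂˣ) : ℂ) • basA (p.1 + r.1, p.2 + r.2) := by
    intro p r
    rw [hbasA p, hbasA r, hbasA (p.1 + r.1, p.2 + r.2)]
    rw [mul_assoc, ← mul_assoc ((Vn ^ p.2 : Aˣ) : A), hcommA, smul_mul_assoc, mul_smul_comm]
    rw [mul_assoc, ← mul_assoc ((Un ^ p.1 : Aˣ) : A), ← Units.val_mul, ← zpow_add,
      ← Units.val_mul, ← zpow_add]
  have hmulB : ∀ p r : ℤ × ℤ, (basB p) * (basB r)
      = ((w ^ (p.2 * r.1) : ℂˣ) : ℂ) • basB (p.1 + r.1, p.2 + r.2) := by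
    intro p r
    rw [hbasB p, hbasB r, hbasB (p.1 + r.1, p.2 + r.2)]
    rw [mul_assoc, ← mul_assoc ((Vm ^ p.2 : Bˣ) : B), hcommB, smul_mul_assoc, mul_smul_comm]
    rw [mul_assoc, ← mul_assoc ((Um ^ p.1 : Bˣ) : B), ← Units.val_mul, ← zpow_add,
      ← Units.val_mul, ← zpow_add]
  -- the linear map
  set hmap : ℤ × ℤ → ℤ × ℤ := fun ij => ((k : ℤ) * ij.1, (k : ℤ) * ij.2) with hmapdef
  set g0 : A →ₗ[ℂ] B := basA.constr ℂ (basB ∘ hmap) with hg0def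
  have hg0 : ∀ ij : ℤ × ℤ, g0 (basA ij) = basB ((k : ℤ) * ij.1, (k : ℤ) * ij.2) := by
    intro ij
    rw [hg0def]
    exact basA.constr_basis ℂ (basB ∘ hmap) ij
  have honeA : basA (0, 0) = 1 := by
    rw [hbasA]; simp
  have honeB : basB (0, 0) = 1 := by
    rw [hbasB]; simp
  have hone' : g0 1 = 1 := by
    rw [← honeA, hg0]
    simpa using honeB
  -- multiplicativity on basis vectors
  have hmulbas : ∀ p r : ℤ × ℤ, g0 (basA p * basA r) = g0 (basA p) * g0 (basA r) := by
    intro p r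
    rw [hmulA, map_smul, hg0, hg0, hg0, hmulB]
    have e1 : (k : ℤ) * (p.1 + r.1) = (k : ℤ) * p.1 + (k : ℤ) * r.1 := by ring
    have e2 : (k : ℤ) * (p.2 + r.2) = (k : ℤ) * p.2 + (k : ℤ) * r.2 := by ring
    have e3 : (w ^ (((k : ℤ) * p.2) * ((k : ℤ) * r.1)) : ℂˣ) = u ^ (p.2 * r.1) := by
      rw [show ((k : ℤ) * p.2) * ((k : ℤ) * r.1) = ((k ^ 2 : ℕ) : ℤ) * (p.2 * r.1) by
        push_cast; ring, zpow_mul, zpow_natCast, hwu]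
    rw [e1, e2, e3]
  have hmul : ∀ x y : A, g0 (x * y) = g0 x * g0 y := by
    have h1 : ∀ p : ℤ × ℤ, ∀ y : A, g0 (basA p * y) = g0 (basA p) * g0 y := by
      intro p
      have heq : g0 ∘ₗ LinearMap.mulLeft ℂ (basA p)
          = LinearMap.mulLeft ℂ (g0 (basA p)) ∘ₗ g0 :=
        basA.ext fun r => by simp [LinearMap.mulLeft_apply, hmulbas]
      intro y
      simpa using LinearMap.congr_fun heq y
    intro x y
    have heq : g0 ∘ₗ LinearMap.mulRight ℂ y = LinearMap.mulRight ℂ (g0 y) ∘ₗ g0 :=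
      basA.ext fun p => by simp [LinearMap.mulRight_apply, h1]
    simpa using LinearMap.congr_fun heq x
  -- ring hom
  let F : A →+* B :=
    { toFun := g0, map_one' := hone', map_mul' := hmul, map_zero' := map_zero g0,
      map_add' := map_add g0 }
  have hFapp : ∀ x : A, F x = g0 x := fun _ => rfl
  have hC : ∀ c : ℂ, F (algebraMap ℂ A c) = algebraMap ℂ B c := by
    intro c
    rw [Algebra.algebraMap_eq_smul_one, Algebra.algebraMap_eq_smul_one, hFapp,
      map_smul, hone']
  let G : A →ₐ[ℂ] B := { toRingHom := F, commutes' := hC }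
  -- commuting with L on generators
  have hs1 : F (algebraMap L A (s : L)) = algebraMap L B (s : L) := by
    rw [hsA, hsB, hFapp]
    have e : ((Un ^ n : Aˣ) : A) = basA ((n : ℤ), 0) := by
      rw [hbasA]; simp [zpow_natCast]
    rw [e, hg0, hbasB]
    simp only [mul_zero, zpow_zero, Units.val_one, mul_one]
    rw [show (k : ℤ) * ((n : ℤ)) = ((n * k : ℕ) : ℤ) by push_cast; ring, zpow_natCast]
  have ht1 : F (algebraMap L A (t : L)) = algebraMap L B (t : L) := by
    rw [htA, htB, hFapp]
    have e : ((Vn ^ n : Aˣ) : A) = basA (0, (n : ℤ)) := by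
      rw [hbasA]; simp [zpow_natCast]
    rw [e, hg0, hbasB]
    simp only [zpow_zero, Units.val_one, one_mul, mul_zero]
    rw [show (k : ℤ) * ((n : ℤ)) = ((n * k : ℕ) : ℤ) by push_cast; ring, zpow_natCast]
  have hsinv : F (algebraMap L A ((s⁻¹ : Lˣ) : L)) = algebraMap L B ((s⁻¹ : Lˣ) : L) := by
    have hA1 : algebraMap L A ((s⁻¹ : Lˣ) : L) * algebraMap L A (s : L) = 1 := by
      rw [← map_mul, Units.inv_mul, map_one]
    have hB1 : algebraMap L B (s : L) * algebraMap L B ((s⁻¹ : Lˣ) : L) = 1 := by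
      rw [← map_mul, Units.mul_inv, map_one]
    calc F (algebraMap L A ((s⁻¹ : Lˣ) : L))
        = F (algebraMap L A ((s⁻¹ : Lˣ) : L))
          * (algebraMap L B (s : L) * algebraMap L B ((s⁻¹ : Lˣ) : L)) := by
          rw [hB1, mul_one]
      _ = (F (algebraMap L A ((s⁻¹ : Lˣ) : L)) * F (algebraMap L A (s : L)))
          * algebraMap L B ((s⁻¹ : Lˣ) : L) := by rw [← hs1, mul_assoc]
      _ = algebraMap L B ((s⁻¹ : Lˣ) : L) := by rw [← map_mul, hA1, map_one, one_mul]
  have htinv : F (algebraMap L A ((t⁻¹ : Lˣ) : L)) = algebraMap L B ((t⁻¹ : Lˣ) : L) := by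
    have hA1 : algebraMap L A ((t⁻¹ : Lˣ) : L) * algebraMap L A (t : L) = 1 := by
      rw [← map_mul, Units.inv_mul, map_one]
    have hB1 : algebraMap L B (t : L) * algebraMap L B ((t⁻¹ : Lˣ) : L) = 1 := by
      rw [← map_mul, Units.mul_inv, map_one]
    calc F (algebraMap L A ((t⁻¹ : Lˣ) : L))
        = F (algebraMap L A ((t⁻¹ : Lˣ) : L))
          * (algebraMap L B (t : L) * algebraMap L B ((t⁻¹ : Lˣ) : L)) := by
          rw [hB1, mul_one]
      _ = (F (algebraMap L A ((t⁻¹ : Lˣ) : L)) * F (algebraMap L A (t : L)))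
          * algebraMap L B ((t⁻¹ : Lˣ) : L) := by rw [← ht1, mul_assoc]
      _ = algebraMap L B ((t⁻¹ : Lˣ) : L) := by rw [← map_mul, hA1, map_one, one_mul]
  have hcomm : ∀ r : L, F (algebraMap L A r) = algebraMap L B r := by
    have hsub : Algebra.adjoin ℂ ({(s : L), ((s⁻¹ : Lˣ) : L), (t : L), ((t⁻¹ : Lˣ) : L)} : Set L)
        ≤ AlgHom.equalizer (G.comp (IsScalarTower.toAlgHom ℂ L A))
          (IsScalarTower.toAlgHom ℂ L B) := by
      rw [Algebra.adjoin_le_iff]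
      intro x hx
      simp only [Set.mem_insert_iff, Set.mem_singleton_iff] at hx
      rcases hx with rfl | rfl | rfl | rfl
      · exact hs1
      · exact hsinv
      · exact ht1
      · exact htinv
    intro r
    have hr : r ∈ AlgHom.equalizer (G.comp (IsScalarTower.toAlgHom ℂ L A))
        (IsScalarTower.toAlgHom ℂ L B) := hsub (hL ▸ Algebra.mem_top)
    exact hr
  let fL : A →ₐ[L] B := { toRingHom := F, commutes' := hcomm }
  -- injectivity
  have hfun : Function.Injective hmap := by
    intro a b hab
    have hk0 : (k : ℤ) ≠ 0 := by exact_mod_cast hk.ne'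
    rw [hmapdef] at hab
    have h1 := congrArg Prod.fst hab
    have h2 := congrArg Prod.snd hab
    simp only at h1 h2
    have := mul_left_cancel₀ hk0 h1
    have := mul_left_cancel₀ hk0 h2
    exact Prod.ext ‹a.1 = b.1› ‹a.2 = b.2›
  have hli : LinearIndependent ℂ (basB ∘ hmap) := basB.linearIndependent.comp hmap hfun
  have hinj : Function.Injective g0 := by
    intro x y hxy
    have h0 : g0 (x - y) = 0 := by rw [map_sub, hxy, sub_self]
    have h1 : Finsupp.linearCombination ℂ (basB ∘ hmap) (basA.repr (x - y)) = 0 := by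
      rw [Finsupp.linearCombination_apply]
      rw [hg0def, Module.Basis.constr_apply] at h0
      exact h0
    have hre : basA.repr (x - y) = 0 := linearIndependent_iff.mp hli _ h1
    have hxy0 : x - y = 0 := by
      have := congrArg basA.repr.symm hre
      simpa using this
    exact sub_eq_zero.mp hxy0
  refine ⟨fL, ?_, ?_, ?_⟩
  · exact hinj
  · have e : ((Un : Aˣ) : A) = basA (1, 0) := by rw [hbasA]; simp
    show F ((Un : Aˣ) : A) = ((Um ^ k : Bˣ) : B)
    rw [hFapp, e, hg0, hbasB]
    simp [zpow_natCast]
  · have e : ((Vn : Aˣ) : A) = basA (0, 1) := by rw [hbasA]; simp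
    show F ((Vn : Aˣ) : A) = ((Vm ^ k : Bˣ) : B)
    rw [hFapp, e, hg0, hbasB]
    simp [zpow_natCast]
end
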